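/- arXiv:1810.12600 — 2 statements merged into one kernel-verified Lean document; each statement's English description precedes it below -/
import Mathlib

section
/- Let Φ be a vector in ℂ^(V × {0,…,d−1}) satisfying W Φ = Φ, and set a_u = ⟨ψ_u, Φ⟩. Then a_u = a_v for every pair of adjacent vertices u, v (i.e. whenever A(u,v) ≠ 0). Consequently, if in addition any two vertices of the graph are joined by a path of edges and Φ is orthogonal to the uniform superposition state (1/√(dN)) Σ_x e_x (where N = |V|), then a_u = 0 for all u ∈ V. -/
open scoped InnerProductSpace
open Complex

/-- The coin state `ψ_u = (1/√d) Σ_g e_{(u,g)}`. -/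
noncomputable def psiState (V : Type*) [Fintype V] [DecidableEq V] (d : ℕ) (u : V) :
    EuclideanSpace ℂ (V × Fin d) :=
  WithLp.toLp 2 (fun x => if x.1 = u then ((1 / Real.sqrt d : ℝ) : ℂ) else 0)

/-- The coin operator `C = 2 Σ_u |ψ_u⟩⟨ψ_u| − I` applied to a vector. -/
noncomputable def coinOp {V : Type*} [Fintype V] [DecidableEq V] {d : ℕ}
    (Φ : EuclideanSpace ℂ (V × Fin d)) : EuclideanSpace ℂ (V × Fin d) :=
  (2 : ℂ) • (∑ u : V, ⟪psiState V d u, Φ⟫_ℂ • psiState V d u) - Φ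

/-- The flip-flop walk operator `W = S C`, where `S e_x = e_{σ(x)}`. -/
noncomputable def walkOp {V : Type*} [Fintype V] [DecidableEq V] {d : ℕ}
    (σ : V × Fin d → V × Fin d) (Φ : EuclideanSpace ℂ (V × Fin d)) :
    EuclideanSpace ℂ (V × Fin d) :=
  WithLp.toLp 2 (fun x => coinOp Φ (σ x))

/-- The normalized adjacency matrix entry `A(u,v) = |{g : (σ(u,g)).1 = v}| / d`. -/
noncomputable def adjEntry {V : Type*} [Fintype V] [DecidableEq V] {d : ℕ}
    (σ : V × Fin d → V × Fin d) (u v : V) : ℝ :=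
  (Finset.univ.filter (fun g : Fin d => (σ (u, g)).1 = v)).card / d

/-- The uniform superposition state `(1/√(dN)) Σ_x e_x`. -/
noncomputable def uniformState (V : Type*) [Fintype V] (d : ℕ) :
    EuclideanSpace ℂ (V × Fin d) :=
  WithLp.toLp 2 (fun _ => ((1 / Real.sqrt (d * Fintype.card V) : ℝ) : ℂ))

/-- If `W Φ = Φ` and `a_u = ⟨ψ_u, Φ⟩`, then `a_u = a_v` for adjacent `u, v`.
Consequently, if the graph is connected and `Φ` is orthogonal to the uniform superposition,
then all `a_u` vanish. -/
theorem walk_fixed_vector_constant_overlaps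
    {V : Type*} [Fintype V] [DecidableEq V] [Nonempty V] {d : ℕ} (hd : 1 ≤ d)
    (σ : V × Fin d → V × Fin d) (hσ : ∀ x, σ (σ x) = x)
    (Φ : EuclideanSpace ℂ (V × Fin d)) (hW : walkOp σ Φ = Φ)
    (a : V → ℂ) (ha : ∀ u, a u = ⟪psiState V d u, Φ⟫_ℂ) :
    (∀ u v : V, adjEntry σ u v ≠ 0 → a u = a v) ∧
    ((∀ u v : V, Relation.ReflTransGen (fun p q : V => adjEntry σ p q ≠ 0) u v) →
      ⟪uniformState V d, Φ⟫_ℂ = 0 → ∀ u : V, a u = 0) := by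
  have hdpos : (0:ℝ) < d := by exact_mod_cast hd
  have hd0 : (Real.sqrt d : ℝ) ≠ 0 := ne_of_gt (Real.sqrt_pos.mpr hdpos)
  -- key pointwise identity
  have key : ∀ x : V × Fin d,
      Φ (σ x) + Φ x = 2 * ((1 / Real.sqrt d : ℝ) : ℂ) * a x.1 := by
    intro x
    have h := congrFun (congrArg WithLp.ofLp hW) (σ x)
    simp only [walkOp] at h
    rw [hσ] at h
    have hs : (∑ u : V, ⟪psiState V d u, Φ⟫_ℂ • psiState V d u) x
        = ∑ u : V, ⟪psiState V d u, Φ⟫_ℂ * psiState V d u x :=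
      by rw [WithLp.ofLp_sum]; exact Finset.sum_apply x Finset.univ _
    have hc : coinOp Φ x
        = (2 : ℂ) * ((1 / Real.sqrt d : ℝ) : ℂ) * ⟪psiState V d x.1, Φ⟫_ℂ - Φ x := by
      show (2 : ℂ) * (∑ u : V, ⟪psiState V d u, Φ⟫_ℂ • psiState V d u) x - Φ x = _
      rw [hs]
      have : ∑ u : V, ⟪psiState V d u, Φ⟫_ℂ * psiState V d u x
          = ⟪psiState V d x.1, Φ⟫_ℂ * ((1 / Real.sqrt d : ℝ) : ℂ) := by
        rw [Finset.sum_eq_single x.1]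
        · simp [psiState]
        · intro b _ hb; simp [psiState, hb.symm]
        · simp
      rw [this]; ring
    rw [hc, ← ha] at h
    linear_combination -h
  have hsd : ((1 / Real.sqrt d : ℝ) : ℂ) ≠ 0 := by
    simp [hd0]
  -- adjacency implies equal overlaps
  have adj : ∀ u v : V, adjEntry σ u v ≠ 0 → a u = a v := by
    intro u v huv
    have hne : (Finset.univ.filter (fun g : Fin d => (σ (u, g)).1 = v)).Nonempty := by
      rw [Finset.nonempty_iff_ne_empty]
      intro hempty
      apply huv
      simp [adjEntry, hempty]
    obtain ⟨g, hg⟩ := hne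
    have hgv : (σ (u, g)).1 = v := (Finset.mem_filter.mp hg).2
    have h1 := key (u, g)
    have h2 := key (σ (u, g))
    rw [hσ, hgv] at h2
    have heq : 2 * ((1 / Real.sqrt d : ℝ) : ℂ) * a u
        = 2 * ((1 / Real.sqrt d : ℝ) : ℂ) * a v := by
      rw [← h1, ← h2]; ring
    exact mul_left_cancel₀ (mul_ne_zero two_ne_zero hsd) heq
  refine ⟨adj, fun hconn horth u => ?_⟩
  -- a is constant
  have hconst : ∀ v : V, a v = a u := by
    intro v
    have h := hconn u v
    induction h with
    | refl => rfl
    | tail _ hbc ih => rw [← ih]; exact (adj _ _ hbc).symm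
  have hinner : ⟪uniformState V d, Φ⟫_ℂ
      = ((1 / Real.sqrt (d * Fintype.card V) : ℝ) : ℂ) * ∑ x : V × Fin d, Φ x := by
    simp [PiLp.inner_apply, RCLike.inner_apply, uniformState, Finset.mul_sum]
    exact Finset.sum_congr rfl fun _ _ => mul_comm _ _
  have haΦ : ∀ v : V, a v = ((1 / Real.sqrt d : ℝ) : ℂ) * ∑ g : Fin d, Φ (v, g) := by
    intro v
    rw [ha]
    simp [PiLp.inner_apply, RCLike.inner_apply, psiState, Finset.mul_sum,
      Fintype.sum_prod_type]
    rw [Finset.sum_eq_single v]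
    · simp; exact Finset.sum_congr rfl fun _ _ => mul_comm _ _
    · intro b _ hb; simp [hb]
    · simp
  have hx : ∑ x : V × Fin d, Φ x = ∑ v : V, ∑ g : Fin d, Φ (v, g) :=
    Fintype.sum_prod_type (f := fun x : V × Fin d => Φ x)
  have hsa : ∑ v : V, a v = ((1 / Real.sqrt d : ℝ) : ℂ) * ∑ x : V × Fin d, Φ x := by
    rw [hx, Finset.mul_sum]
    exact Finset.sum_congr rfl fun v _ => haΦ v
  have hc0 : ((1 / Real.sqrt (d * Fintype.card V) : ℝ) : ℂ) ≠ 0 := by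
    have hpos : (0:ℝ) < d * Fintype.card V :=
      mul_pos hdpos (by exact_mod_cast Fintype.card_pos)
    exact Complex.ofReal_ne_zero.mpr (one_div_ne_zero (ne_of_gt (Real.sqrt_pos.mpr hpos)))
  have hΦ0 : ∑ x : V × Fin d, Φ x = 0 := by
    rw [hinner] at horth
    exact (mul_eq_zero.mp horth).resolve_left hc0
  have hs0 : ∑ v : V, a v = 0 := by rw [hsa, hΦ0, mul_zero]
  have hsv : ∑ v : V, a v = (Fintype.card V : ℂ) * a u := by
    rw [Finset.sum_congr rfl fun v _ => hconst v, Finset.sum_const]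
    simp [nsmul_eq_mul]
  rw [hsv] at hs0
  have hN : (Fintype.card V : ℂ) ≠ 0 := Nat.cast_ne_zero.mpr Fintype.card_ne_zero
  exact (mul_eq_zero.mp hs0).resolve_left hN
end

section
/- Let Φ be a vector in ℂ^(V × {0,…,d−1}) satisfying W Φ = −Φ, and set a_u = ⟨ψ_u, Φ⟩. Then a_u = −a_v for every pair of adjacent vertices u, v (i.e. whenever A(u,v) ≠ 0). Consequently, if in addition the graph contains a closed walk of odd length and any two vertices are joined by a path of edges, then a_u = 0 for all u ∈ V. -/
open scoped InnerProductSpace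
open Complex

/-- If `W Φ = −Φ` and `a_u = ⟨ψ_u, Φ⟩`, then `a_u = −a_v` for adjacent
`u, v`.  Consequently, if the graph contains a closed walk of odd length and is connected,
then all `a_u` vanish. -/
theorem walk_antifixed_vector_alternating_overlaps
    {V : Type*} [Fintype V] [DecidableEq V] [Nonempty V] {d : ℕ} (hd : 1 ≤ d)
    (σ : V × Fin d → V × Fin d) (hσ : ∀ x, σ (σ x) = x)
    (Φ : EuclideanSpace ℂ (V × Fin d)) (hW : walkOp σ Φ = -Φ)
    (a : V → ℂ) (ha : ∀ u, a u = ⟪psiState V d u, Φ⟫_ℂ) :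
    (∀ u v : V, adjEntry σ u v ≠ 0 → a u = -a v) ∧
    ((∃ (n : ℕ) (c : ℕ → V), Odd n ∧ c n = c 0 ∧
        ∀ i < n, adjEntry σ (c i) (c (i + 1)) ≠ 0) →
      (∀ u v : V, Relation.ReflTransGen (fun p q : V => adjEntry σ p q ≠ 0) u v) →
      ∀ u : V, a u = 0) := by
  set cc : ℂ := ((1 / Real.sqrt d : ℝ) : ℂ) with hcc
  have hdpos : (0:ℝ) < d := by exact_mod_cast hd
  have hcne : cc ≠ 0 := by
    simp only [hcc, ne_eq, Complex.ofReal_eq_zero, one_div, inv_eq_zero]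
    exact ne_of_gt (Real.sqrt_pos.mpr hdpos)
  have key : ∀ x : V × Fin d, 2 * a (σ x).1 * cc - Φ (σ x) = - Φ x := by
    intro x
    have h := congrFun (congrArg WithLp.ofLp hW) x
    simp only [walkOp, coinOp, WithLp.ofLp_toLp] at h
    rw [show ((2 : ℂ) • (∑ u : V, ⟪psiState V d u, Φ⟫_ℂ • psiState V d u) - Φ) (σ x)
        = 2 * (∑ u : V, ⟪psiState V d u, Φ⟫_ℂ • psiState V d u) (σ x) - Φ (σ x) from rfl] at h
    rw [show (∑ u : V, ⟪psiState V d u, Φ⟫_ℂ • psiState V d u) (σ x)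
        = ∑ u : V, ⟪psiState V d u, Φ⟫_ℂ * psiState V d u (σ x) from by
      rw [WithLp.ofLp_sum, Finset.sum_apply]; rfl] at h
    have : ∑ u : V, ⟪psiState V d u, Φ⟫_ℂ * psiState V d u (σ x)
        = a (σ x).1 * cc := by
      rw [Finset.sum_eq_single (σ x).1]
      · rw [ha, show psiState V d (σ x).1 (σ x) = cc from by simp [psiState, hcc]]
      · intro b _ hb
        rw [show psiState V d b (σ x) = 0 from by simp [psiState, Ne.symm hb], mul_zero]
      · simp
    rw [this] at h
    rw [show (-Φ) x = - Φ x from rfl] at h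
    linear_combination h
  have edge : ∀ u v : V, adjEntry σ u v ≠ 0 → a u = -a v := by
    intro u v hadj
    obtain ⟨g, hg⟩ : ∃ g : Fin d, (σ (u, g)).1 = v := by
      by_contra h
      push_neg at h
      apply hadj
      unfold adjEntry
      rw [Finset.filter_false_of_mem (fun g _ => h g)]
      simp
    have h1 := key (u, g)
    have h2 := key (σ (u, g))
    rw [hσ] at h2
    rw [hg] at h1
    have h2' : 2 * a u * cc - Φ (u, g) = -Φ (σ (u, g)) := h2
    have h3 : 2 * cc * (a u + a v) = 0 := by linear_combination h1 + h2'
    have h4 : a u + a v = 0 := by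
      rcases mul_eq_zero.mp h3 with h | h
      · rcases mul_eq_zero.mp h with h | h
        · exact absurd h two_ne_zero
        · exact absurd h hcne
      · exact h
    linear_combination h4
  refine ⟨edge, ?_⟩
  rintro ⟨n, cw, hodd, hclose, hstep⟩ hconn u
  have alt : ∀ i, i ≤ n → a (cw i) = (-1)^i * a (cw 0) := by
    intro i
    induction i with
    | zero => simp
    | succ i ih =>
      intro hi
      have he := edge (cw i) (cw (i+1)) (hstep i (by omega))
      have hprev := ih (by omega)
      rw [hprev] at he
      rw [pow_succ]
      linear_combination he
  have h0 : a (cw 0) = 0 := by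
    have := alt n le_rfl
    rw [hclose, hodd.neg_one_pow] at this
    linear_combination this / 2
  have : ∀ w : V, a w = 0 := by
    intro w
    have hpath := hconn (cw 0) w
    induction hpath with
    | refl => exact h0
    | tail _ hpq ih =>
      have := edge _ _ hpq
      rw [ih] at this
      linear_combination this
  exact this u
end
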